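/- Let f_0,…,f_{m−1} be measure-preserving transformations of a probability space (X,𝔅,μ) and ξ a finite measurable partition of X. Then the sequence a_n = m^{−n} Σ_{|w|=n} H_μ(⋁_{w'≤w} f_{w'}^{−1}ξ) is subadditive (a_{n_1+n_2} ≤ a_{n_1} + a_{n_2} for all n_1,n_2 ≥ 1), and consequently the limit lim_{n→∞}(1/n)[ m^{−n} Σ_{|w|=n} H_μ(⋁_{w'≤w} f_{w'}^{−1}ξ) ] exists. -/

import Mathlib

open Filter Topology MeasureTheory Set

namespace FSA

/-- `f_w = f_{w₁} ∘ ⋯ ∘ f_{w_k}` for the word `w = [w₁,…,w_k]`; the empty word acts as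
the identity. -/
def wordMap {X : Type*} {ι : Type*} (f : ι → X → X) : List ι → X → X
  | [] => id
  | a :: t => f a ∘ wordMap f t

/-- `(S_wφ)(x) = Σ_{w'} φ(f_{w'}x)`, summing over the `|w|` words `w'` consisting of the
empty word and the proper suffixes of `w`. -/
noncomputable def birkhoff {X : Type*} {ι : Type*} (f : ι → X → X) (φ : X → ℝ)
    (w : List ι) (x : X) : ℝ :=
  (w.tails.tail.map fun w' => φ (wordMap f w' x)).sum

section Meas

variable {X : Type*} {ι : Type*}

/-- `μ` is invariant under each generator: `μ(fᵢ⁻¹ A) = μ(A)` for every measurable set `A`. -/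
def IsInvariant [MeasurableSpace X] (f : ι → X → X) (μ : Measure X) : Prop :=
  ∀ i : ι, ∀ A : Set X, MeasurableSet A → μ (f i ⁻¹' A) = μ A

/-- A finite measurable partition of `X`, viewed as a finite set of measurable, pairwise
disjoint sets whose union is `X`. -/
def IsPartition [MeasurableSpace X] (ξ : Finset (Set X)) : Prop :=
  (∀ A ∈ ξ, MeasurableSet A) ∧
    ((↑ξ : Set (Set X)).Pairwise fun A B => A ∩ B = ∅) ∧
    ⋃₀ (↑ξ : Set (Set X)) = Set.univ

/-- Entropy of a finite partition: `H_μ(ξ) = -Σ_{A∈ξ} μ(A) log μ(A)` (with `0 log 0 = 0`). -/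
noncomputable def entPart [MeasurableSpace X] (μ : Measure X) (ξ : Finset (Set X)) : ℝ :=
  ∑ A ∈ ξ, Real.negMulLog (μ A).toReal

/-- Conditional entropy
`H_μ(ξ|η) = -Σ_{C∈η, μ(C)≠0} Σ_{A∈ξ} μ(A∩C) log (μ(A∩C)/μ(C))`. -/
noncomputable def condEntPart [MeasurableSpace X] (μ : Measure X) (ξ η : Finset (Set X)) : ℝ :=
  - ∑ C ∈ η, ∑ A ∈ ξ,
      if μ C = 0 then 0
      else (μ (A ∩ C)).toReal * Real.log ((μ (A ∩ C)).toReal / (μ C).toReal)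

/-- The join `ξ ∨ η` of two partitions. -/
noncomputable def partJoin (ξ η : Finset (Set X)) : Finset (Set X) :=
  @Finset.image _ _ (Classical.decEq _) (fun p : Set X × Set X => p.1 ∩ p.2) (ξ ×ˢ η)

/-- The preimage partition `T⁻¹ ξ`. -/
noncomputable def preimgPart (T : X → X) (ξ : Finset (Set X)) : Finset (Set X) :=
  @Finset.image _ _ (Classical.decEq _) (fun A : Set X => T ⁻¹' A) ξ

/-- The join `⋁_{w'≤w} f_{w'}⁻¹ ξ` over the `|w|` words `w'` consisting of the empty word
and the proper suffixes of `w`. -/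
noncomputable def wordJoin (f : ι → X → X) (ξ : Finset (Set X)) (w : List ι) :
    Finset (Set X) :=
  w.tails.tail.foldr (fun w' acc => partJoin (preimgPart (wordMap f w') ξ) acc) {Set.univ}

/-- `a_n = m^{-n} Σ_{|w|=n} H_μ(⋁_{w'≤w} f_{w'}⁻¹ ξ)`. -/
noncomputable def entSeq [MeasurableSpace X] [Fintype ι] (f : ι → X → X) (μ : Measure X)
    (ξ : Finset (Set X)) (n : ℕ) : ℝ :=
  (1 / (Fintype.card ι : ℝ) ^ n) * ∑ w : Fin n → ι, entPart μ (wordJoin f ξ (List.ofFn w))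

/-- `h_μ(f₀,…,f_{m-1},ξ) = lim_n (1/n) a_n`; the limit exists, and is expressed here as a
`limsup`. -/
noncomputable def hPart [MeasurableSpace X] [Fintype ι] (f : ι → X → X) (μ : Measure X)
    (ξ : Finset (Set X)) : ℝ :=
  Filter.limsup (fun n : ℕ => entSeq f μ ξ n / (n : ℝ)) atTop

/-- Measure-theoretic entropy of the free semigroup action:
`h_μ(f₀,…,f_{m-1}) = sup_ξ h_μ(f₀,…,f_{m-1},ξ)` over all finite measurable partitions. -/
noncomputable def freeEntropy [MeasurableSpace X] [Fintype ι] (f : ι → X → X)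
    (μ : Measure X) : EReal :=
  ⨆ (ξ : Finset (Set X)) (_ : IsPartition ξ), (↑(hPart f μ ξ) : EReal)

end Meas

section Aux

lemma sum_image_le' {α β : Type*} [DecidableEq β] {s : Finset α} {g : α → β} {f : β → ℝ}
    (hf : ∀ a ∈ s, 0 ≤ f (g a)) : ∑ b ∈ s.image g, f b ≤ ∑ a ∈ s, f (g a) := by
  classical
  induction s using Finset.induction_on with
  | empty => simp
  | @insert a s ha ih =>
    rw [Finset.image_insert, Finset.sum_insert ha]
    have h0 : 0 ≤ f (g a) := hf a (Finset.mem_insert_self a s)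
    have ih' := ih (fun x hx => hf x (Finset.mem_insert_of_mem hx))
    by_cases hmem : g a ∈ s.image g
    · rw [Finset.insert_eq_self.2 hmem]
      exact le_add_of_nonneg_of_le h0 ih'
    · rw [Finset.sum_insert hmem]
      exact add_le_add le_rfl ih'

lemma tails_self_cons {ι : Type*} (v : List ι) : v.tails = v :: v.tails.tail := by
  cases v <;> simp

lemma tails_append {ι : Type*} (u v : List ι) :
    (u ++ v).tails = u.tails.map (· ++ v) ++ v.tails.tail := by
  induction u with
  | nil => simpa using (tails_self_cons v)
  | cons a u ih => simp [ih]

lemma tails_tail_append {ι : Type*} (u v : List ι) :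
    (u ++ v).tails.tail = u.tails.tail.map (· ++ v) ++ v.tails.tail := by
  rw [tails_append, tails_self_cons u]
  simp

lemma wordMap_append {X ι : Type*} (f : ι → X → X) (u v : List ι) :
    wordMap f (u ++ v) = wordMap f u ∘ wordMap f v := by
  induction u with
  | nil => rfl
  | cons a u ih => simp [wordMap, ih, Function.comp_assoc]

lemma entropy_subadd {α β : Type*} (s : Finset α) (t : Finset β) (p : α → β → ℝ)
    (hp : ∀ a ∈ s, ∀ b ∈ t, 0 ≤ p a b)
    (hsum : ∑ a ∈ s, ∑ b ∈ t, p a b = 1) :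
    ∑ a ∈ s, ∑ b ∈ t, Real.negMulLog (p a b) ≤
      (∑ a ∈ s, Real.negMulLog (∑ b ∈ t, p a b)) +
      ∑ b ∈ t, Real.negMulLog (∑ a ∈ s, p a b) := by
  classical
  set pA : α → ℝ := fun a => ∑ b ∈ t, p a b with hpA
  set r : α → β → ℝ := fun a b => if pA a = 0 then 0 else p a b / pA a with hr
  have hpA_nonneg : ∀ a ∈ s, 0 ≤ pA a := fun a ha =>
    Finset.sum_nonneg (fun b hb => hp a ha b hb)
  have hfac : ∀ a ∈ s, ∀ b ∈ t, p a b = pA a * r a b := by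
    intro a ha b hb
    by_cases h : pA a = 0
    · have h0 : p a b = 0 :=
        (Finset.sum_eq_zero_iff_of_nonneg (fun b hb => hp a ha b hb)).1 h b hb
      simp [hr, h, h0]
    · simp only [hr, h, if_false]
      field_simp
  have hr_nonneg : ∀ a ∈ s, ∀ b ∈ t, 0 ≤ r a b := by
    intro a ha b hb
    by_cases h : pA a = 0
    · simp [hr, h]
    · simp only [hr, h, if_false]
      exact div_nonneg (hp a ha b hb) (hpA_nonneg a ha)
  have hr_sum : ∀ a ∈ s, pA a ≠ 0 → ∑ b ∈ t, r a b = 1 := by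
    intro a ha h
    simp only [hr, h, if_false, ← Finset.sum_div]
    exact div_self h
  have key : ∀ a ∈ s, ∑ b ∈ t, Real.negMulLog (p a b) =
      (∑ b ∈ t, r a b) * Real.negMulLog (pA a) + pA a * ∑ b ∈ t, Real.negMulLog (r a b) := by
    intro a ha
    rw [Finset.sum_mul, Finset.mul_sum, ← Finset.sum_add_distrib]
    refine Finset.sum_congr rfl fun b hb => ?_
    rw [hfac a ha b hb, Real.negMulLog_mul]
  calc ∑ a ∈ s, ∑ b ∈ t, Real.negMulLog (p a b)
      = ∑ a ∈ s, ((∑ b ∈ t, r a b) * Real.negMulLog (pA a)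
          + pA a * ∑ b ∈ t, Real.negMulLog (r a b)) := Finset.sum_congr rfl key
    _ = (∑ a ∈ s, (∑ b ∈ t, r a b) * Real.negMulLog (pA a))
          + ∑ a ∈ s, pA a * ∑ b ∈ t, Real.negMulLog (r a b) := Finset.sum_add_distrib
    _ ≤ (∑ a ∈ s, Real.negMulLog (pA a)) + ∑ b ∈ t, Real.negMulLog (∑ a ∈ s, p a b) := by
        refine add_le_add (le_of_eq ?_) ?_
        · refine Finset.sum_congr rfl fun a ha => ?_
          by_cases h : pA a = 0
          · simp [h, Real.negMulLog_zero]
          · rw [hr_sum a ha h, one_mul]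
        · have hswap : ∑ a ∈ s, pA a * ∑ b ∈ t, Real.negMulLog (r a b)
              = ∑ b ∈ t, ∑ a ∈ s, pA a * Real.negMulLog (r a b) := by
            simp_rw [Finset.mul_sum]
            exact Finset.sum_comm
          rw [hswap]
          refine Finset.sum_le_sum fun b hb => ?_
          have hj := Real.concaveOn_negMulLog.le_map_sum
            (t := s) (w := pA) (p := fun a => r a b)
            (fun a ha => hpA_nonneg a ha) hsum
            (fun a ha => hr_nonneg a ha b hb)
          simp only [smul_eq_mul] at hj
          refine le_trans hj (le_of_eq ?_)
          congr 1
          refine Finset.sum_congr rfl fun a ha => (hfac a ha b hb).symm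

variable {X : Type*} {ι : Type*}

lemma mem_partJoin {ξ η : Finset (Set X)} {C : Set X} :
    C ∈ partJoin ξ η ↔ ∃ A ∈ ξ, ∃ B ∈ η, A ∩ B = C := by
  constructor
  · intro h
    obtain ⟨p, hp, h2⟩ := (@Finset.mem_image _ _ (Classical.decEq _) _ _ _).1 h
    obtain ⟨h3, h4⟩ := Finset.mem_product.1 hp
    exact ⟨p.1, h3, p.2, h4, h2⟩
  · rintro ⟨A, hA, B, hB, rfl⟩
    exact (@Finset.mem_image _ _ (Classical.decEq _) _ _ _).2 ⟨(A, B), Finset.mem_product.2 ⟨hA, hB⟩, rfl⟩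

lemma mem_preimgPart {T : X → X} {ξ : Finset (Set X)} {C : Set X} :
    C ∈ preimgPart T ξ ↔ ∃ A ∈ ξ, T ⁻¹' A = C :=
  @Finset.mem_image _ _ (Classical.decEq _) _ _ _

lemma univ_partJoin (ξ : Finset (Set X)) : partJoin {Set.univ} ξ = ξ := by
  ext C
  rw [mem_partJoin]
  constructor
  · rintro ⟨A, hA, B, hB, rfl⟩
    rw [Finset.mem_singleton] at hA
    subst hA; simpa using hB
  · intro hC; exact ⟨Set.univ, Finset.mem_singleton_self _, C, hC, Set.univ_inter C⟩

lemma partJoin_assoc (ξ η ζ : Finset (Set X)) :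
    partJoin (partJoin ξ η) ζ = partJoin ξ (partJoin η ζ) := by
  ext D
  rw [mem_partJoin, mem_partJoin]
  constructor
  · rintro ⟨E, hE, C, hC, rfl⟩
    obtain ⟨A, hA, B, hB, rfl⟩ := mem_partJoin.1 hE
    exact ⟨A, hA, B ∩ C, mem_partJoin.2 ⟨B, hB, C, hC, rfl⟩, (Set.inter_assoc A B C).symm⟩
  · rintro ⟨A, hA, E, hE, rfl⟩
    obtain ⟨B, hB, C, hC, rfl⟩ := mem_partJoin.1 hE
    exact ⟨A ∩ B, mem_partJoin.2 ⟨A, hA, B, hB, rfl⟩, C, hC, Set.inter_assoc A B C⟩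

lemma preimgPart_partJoin (T : X → X) (ξ η : Finset (Set X)) :
    preimgPart T (partJoin ξ η) = partJoin (preimgPart T ξ) (preimgPart T η) := by
  ext D
  rw [mem_preimgPart, mem_partJoin]
  constructor
  · rintro ⟨C, hC, rfl⟩
    obtain ⟨A, hA, B, hB, rfl⟩ := mem_partJoin.1 hC
    exact ⟨T ⁻¹' A, mem_preimgPart.2 ⟨A, hA, rfl⟩, T ⁻¹' B, mem_preimgPart.2 ⟨B, hB, rfl⟩, rfl⟩
  · rintro ⟨A', hA', B', hB', rfl⟩
    obtain ⟨A, hA, rfl⟩ := mem_preimgPart.1 hA'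
    obtain ⟨B, hB, rfl⟩ := mem_preimgPart.1 hB'
    exact ⟨A ∩ B, mem_partJoin.2 ⟨A, hA, B, hB, rfl⟩, rfl⟩

lemma preimgPart_comp (g h : X → X) (ξ : Finset (Set X)) :
    preimgPart (g ∘ h) ξ = preimgPart h (preimgPart g ξ) := by
  ext D
  rw [mem_preimgPart, mem_preimgPart]
  constructor
  · rintro ⟨A, hA, rfl⟩
    exact ⟨g ⁻¹' A, mem_preimgPart.2 ⟨A, hA, rfl⟩, rfl⟩
  · rintro ⟨A', hA', rfl⟩
    obtain ⟨A, hA, rfl⟩ := mem_preimgPart.1 hA'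
    exact ⟨A, hA, rfl⟩

lemma preimgPart_univ (T : X → X) : preimgPart T ({Set.univ} : Finset (Set X)) = {Set.univ} := by
  ext D
  rw [mem_preimgPart]
  constructor
  · rintro ⟨A, hA, rfl⟩
    rw [Finset.mem_singleton] at hA
    subst hA; simp
  · intro hD
    rw [Finset.mem_singleton] at hD
    exact ⟨Set.univ, Finset.mem_singleton_self _, by simp [hD]⟩

section MeasAux
variable [MeasurableSpace X]

lemma isPartition_univ : IsPartition ({Set.univ} : Finset (Set X)) := by
  refine ⟨fun A hA => ?_, ?_, ?_⟩
  · rw [Finset.mem_singleton] at hA; subst hA; exact MeasurableSet.univ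
  · simp
  · simp

lemma isPartition_partJoin {ξ η : Finset (Set X)} (hξ : IsPartition ξ) (hη : IsPartition η) :
    IsPartition (partJoin ξ η) := by
  refine ⟨fun C hC => ?_, fun C hC C' hC' hne => ?_, ?_⟩
  · obtain ⟨A, hA, B, hB, rfl⟩ := mem_partJoin.1 hC
    exact (hξ.1 A hA).inter (hη.1 B hB)
  · obtain ⟨A, hA, B, hB, rfl⟩ := mem_partJoin.1 (Finset.mem_coe.1 hC)
    obtain ⟨A', hA', B', hB', rfl⟩ := mem_partJoin.1 (Finset.mem_coe.1 hC')
    show (A ∩ B) ∩ (A' ∩ B') = ∅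
    by_cases hAA : A = A'
    · subst hAA
      have hBB : B ≠ B' := fun h => hne (by rw [h])
      have h2 : B ∩ B' = ∅ := hη.2.1 (Finset.mem_coe.2 hB) (Finset.mem_coe.2 hB') hBB
      rw [← Set.subset_empty_iff] at h2 ⊢
      exact fun x hx => h2 ⟨hx.1.2, hx.2.2⟩
    · have h2 : A ∩ A' = ∅ := hξ.2.1 (Finset.mem_coe.2 hA) (Finset.mem_coe.2 hA') hAA
      rw [← Set.subset_empty_iff] at h2 ⊢
      exact fun x hx => h2 ⟨hx.1.1, hx.2.1⟩
  · apply Set.eq_univ_of_forall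
    intro x
    have hx1 : x ∈ ⋃₀ (↑ξ : Set (Set X)) := by rw [hξ.2.2]; trivial
    have hx2 : x ∈ ⋃₀ (↑η : Set (Set X)) := by rw [hη.2.2]; trivial
    obtain ⟨A, hA, hxA⟩ := hx1
    obtain ⟨B, hB, hxB⟩ := hx2
    exact ⟨A ∩ B, Finset.mem_coe.2 (mem_partJoin.2 ⟨A, Finset.mem_coe.1 hA, B, Finset.mem_coe.1 hB, rfl⟩), hxA, hxB⟩

lemma isPartition_preimgPart {T : X → X} (hT : Measurable T) {ξ : Finset (Set X)}
    (hξ : IsPartition ξ) : IsPartition (preimgPart T ξ) := by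
  refine ⟨fun C hC => ?_, fun C hC C' hC' hne => ?_, ?_⟩
  · obtain ⟨A, hA, rfl⟩ := mem_preimgPart.1 hC
    exact hT (hξ.1 A hA)
  · obtain ⟨A, hA, rfl⟩ := mem_preimgPart.1 (Finset.mem_coe.1 hC)
    obtain ⟨A', hA', rfl⟩ := mem_preimgPart.1 (Finset.mem_coe.1 hC')
    have hAA : A ≠ A' := fun h => hne (by rw [h])
    show T ⁻¹' A ∩ T ⁻¹' A' = ∅
    rw [← Set.preimage_inter, hξ.2.1 (Finset.mem_coe.2 hA) (Finset.mem_coe.2 hA') hAA,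
      Set.preimage_empty]
  · apply Set.eq_univ_of_forall
    intro x
    have hx1 : T x ∈ ⋃₀ (↑ξ : Set (Set X)) := by rw [hξ.2.2]; trivial
    obtain ⟨A, hA, hxA⟩ := hx1
    exact ⟨T ⁻¹' A, Finset.mem_coe.2 (mem_preimgPart.2 ⟨A, Finset.mem_coe.1 hA, rfl⟩), hxA⟩

lemma sum_measure_inter {μ : Measure X} [IsProbabilityMeasure μ] {η : Finset (Set X)}
    (hη : IsPartition η) {A : Set X} (hA : MeasurableSet A) :
    ∑ B ∈ η, (μ (A ∩ B)).toReal = (μ A).toReal := by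
  have hdis : (↑η : Set (Set X)).PairwiseDisjoint (fun B => A ∩ B) := by
    intro B hB B' hB' hne
    have h2 : B ∩ B' = ∅ := hη.2.1 hB hB' hne
    refine Set.disjoint_left.2 fun x hx hx' => ?_
    have hx2 : x ∈ B ∩ B' := ⟨hx.2, hx'.2⟩
    rw [h2] at hx2; exact hx2
  have hmeas : ∀ B ∈ η, MeasurableSet (A ∩ B) := fun B hB => hA.inter (hη.1 B hB)
  have hunion : ⋃ B ∈ η, (A ∩ B) = A := by
    rw [← Set.inter_iUnion₂]
    have h3 : ⋃ B ∈ η, B = Set.univ := by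
      rw [← hη.2.2, Set.sUnion_eq_biUnion]
      simp
    rw [h3, Set.inter_univ]
  have hmb := measure_biUnion_finset (μ := μ) hdis hmeas
  rw [hunion] at hmb
  rw [← ENNReal.toReal_sum (fun B hB => measure_ne_top μ (A ∩ B)), ← hmb]

lemma nml_toReal_nonneg (μ : Measure X) [IsProbabilityMeasure μ] (C : Set X) :
    0 ≤ Real.negMulLog (μ C).toReal :=
  Real.negMulLog_nonneg ENNReal.toReal_nonneg
    (by calc (μ C).toReal ≤ (1 : ENNReal).toReal :=
          ENNReal.toReal_mono ENNReal.one_ne_top prob_le_one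
        _ = 1 := by simp)

lemma entPart_nonneg (μ : Measure X) [IsProbabilityMeasure μ] (ξ : Finset (Set X)) :
    0 ≤ entPart μ ξ := by
  refine Finset.sum_nonneg fun A hA => Real.negMulLog_nonneg ENNReal.toReal_nonneg ?_
  calc (μ A).toReal ≤ (1 : ENNReal).toReal := ENNReal.toReal_mono ENNReal.one_ne_top prob_le_one
    _ = 1 := by simp

lemma entPart_partJoin_le (μ : Measure X) [IsProbabilityMeasure μ] {ξ η : Finset (Set X)}
    (hξ : IsPartition ξ) (hη : IsPartition η) :
    entPart μ (partJoin ξ η) ≤ entPart μ ξ + entPart μ η := by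
  classical
  have h1 : entPart μ (partJoin ξ η) ≤
      ∑ A ∈ ξ, ∑ B ∈ η, Real.negMulLog (μ (A ∩ B)).toReal := by
    unfold entPart partJoin
    refine le_trans (sum_image_le' fun p hp => nml_toReal_nonneg μ _) (le_of_eq ?_)
    exact Finset.sum_product _ _ _
  have h2 := entropy_subadd ξ η (fun A B => (μ (A ∩ B)).toReal)
    (fun A _ B _ => ENNReal.toReal_nonneg) ?_
  · refine le_trans h1 (le_trans h2 (le_of_eq ?_))
    congr 1
    · refine Finset.sum_congr rfl fun A hA => ?_
      rw [sum_measure_inter hη (hξ.1 A hA)]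
    · refine Finset.sum_congr rfl fun B hB => ?_
      have : ∀ A ∈ ξ, (μ (A ∩ B)).toReal = (μ (B ∩ A)).toReal := fun A _ => by
        rw [Set.inter_comm]
      rw [Finset.sum_congr rfl this, sum_measure_inter hξ (hη.1 B hB)]
  · have : ∀ A ∈ ξ, ∑ B ∈ η, (μ (A ∩ B)).toReal = (μ A).toReal := fun A hA =>
      sum_measure_inter hη (hξ.1 A hA)
    rw [Finset.sum_congr rfl this]
    have h4 : ∀ A ∈ ξ, (μ A).toReal = (μ (Set.univ ∩ A)).toReal := fun A _ => by
      rw [Set.univ_inter]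
    rw [Finset.sum_congr rfl h4, sum_measure_inter hξ MeasurableSet.univ]
    simp

lemma entPart_preimgPart_le (μ : Measure X) [IsProbabilityMeasure μ] {T : X → X}
    (hT : MeasurePreserving T μ μ) {ξ : Finset (Set X)} (hm : ∀ A ∈ ξ, MeasurableSet A) :
    entPart μ (preimgPart T ξ) ≤ entPart μ ξ := by
  unfold entPart preimgPart
  have heq : ∑ A ∈ ξ, Real.negMulLog (μ (T ⁻¹' A)).toReal
      = ∑ A ∈ ξ, Real.negMulLog (μ A).toReal :=
    Finset.sum_congr rfl fun A hA => by rw [hT.measure_preimage (hm A hA).nullMeasurableSet]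
  rw [← heq]
  exact @sum_image_le' _ _ (Classical.decEq _) _ _ _ (fun A hA => nml_toReal_nonneg μ _)

end MeasAux

end Aux

section Aux2

variable {X : Type*} {ι : Type*}

lemma wordMap_measurable [MeasurableSpace X] {f : ι → X → X} (hf : ∀ i, Measurable (f i)) :
    ∀ w : List ι, Measurable (wordMap f w)
  | [] => measurable_id
  | a :: w => (hf a).comp (wordMap_measurable hf w)

lemma wordMap_measurePreserving [MeasurableSpace X] {μ : Measure X} {f : ι → X → X}
    (hf : ∀ i, MeasurePreserving (f i) μ μ) :
    ∀ w : List ι, MeasurePreserving (wordMap f w) μ μ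
  | [] => MeasurePreserving.id μ
  | a :: w => (hf a).comp (wordMap_measurePreserving hf w)

/-- The join over an arbitrary list of words. -/
noncomputable def joinList (f : ι → X → X) (ξ : Finset (Set X)) (L : List (List ι)) :
    Finset (Set X) :=
  L.foldr (fun w' acc => partJoin (preimgPart (wordMap f w') ξ) acc) {Set.univ}

lemma joinList_nil (f : ι → X → X) (ξ : Finset (Set X)) : joinList f ξ [] = {Set.univ} := rfl

lemma joinList_cons (f : ι → X → X) (ξ : Finset (Set X)) (w : List ι) (L : List (List ι)) :
    joinList f ξ (w :: L) = partJoin (preimgPart (wordMap f w) ξ) (joinList f ξ L) := rfl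

lemma wordJoin_eq_joinList (f : ι → X → X) (ξ : Finset (Set X)) (w : List ι) :
    wordJoin f ξ w = joinList f ξ w.tails.tail := rfl

lemma joinList_append (f : ι → X → X) (ξ : Finset (Set X)) (L₁ L₂ : List (List ι)) :
    joinList f ξ (L₁ ++ L₂) = partJoin (joinList f ξ L₁) (joinList f ξ L₂) := by
  induction L₁ with
  | nil => rw [List.nil_append, joinList_nil, univ_partJoin]
  | cons w L ih => rw [List.cons_append, joinList_cons, joinList_cons, ih, partJoin_assoc]

lemma joinList_map_append (f : ι → X → X) (ξ : Finset (Set X)) (L : List (List ι)) (v : List ι) :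
    joinList f ξ (L.map (· ++ v)) = preimgPart (wordMap f v) (joinList f ξ L) := by
  induction L with
  | nil => rw [List.map_nil, joinList_nil, preimgPart_univ]
  | cons w L ih =>
    rw [List.map_cons, joinList_cons, joinList_cons, ih, wordMap_append, preimgPart_comp,
      preimgPart_partJoin]

lemma isPartition_joinList [MeasurableSpace X] {f : ι → X → X} (hf : ∀ i, Measurable (f i))
    {ξ : Finset (Set X)} (hξ : IsPartition ξ) (L : List (List ι)) :
    IsPartition (joinList f ξ L) := by
  induction L with
  | nil => exact isPartition_univ
  | cons w L ih =>
    exact isPartition_partJoin (isPartition_preimgPart (wordMap_measurable hf w) hξ) ih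

lemma isPartition_wordJoin [MeasurableSpace X] {f : ι → X → X} (hf : ∀ i, Measurable (f i))
    {ξ : Finset (Set X)} (hξ : IsPartition ξ) (w : List ι) :
    IsPartition (wordJoin f ξ w) :=
  isPartition_joinList hf hξ _

lemma entPart_wordJoin_append_le [MeasurableSpace X] (μ : Measure X) [IsProbabilityMeasure μ]
    {f : ι → X → X} (hf : ∀ i, MeasurePreserving (f i) μ μ) {ξ : Finset (Set X)}
    (hξ : IsPartition ξ) (u v : List ι) :
    entPart μ (wordJoin f ξ (u ++ v)) ≤ entPart μ (wordJoin f ξ u) + entPart μ (wordJoin f ξ v) := by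
  have hfm : ∀ i, Measurable (f i) := fun i => (hf i).measurable
  rw [wordJoin_eq_joinList, tails_tail_append, joinList_append, joinList_map_append]
  have hp1 : IsPartition (joinList f ξ u.tails.tail) := isPartition_joinList hfm hξ _
  have hp2 : IsPartition (joinList f ξ v.tails.tail) := isPartition_joinList hfm hξ _
  have hstep := entPart_partJoin_le μ
    (isPartition_preimgPart (wordMap_measurable hfm v) hp1) hp2
  refine le_trans hstep (add_le_add ?_ le_rfl)
  exact entPart_preimgPart_le μ (wordMap_measurePreserving hf v) hp1.1

end Aux2

/-- For measure-preserving `f₀,…,f_{m-1}` and a finite measurable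
partition `ξ`, the sequence `a_n = m^{-n} Σ_{|w|=n} H_μ(⋁_{w'≤w} f_{w'}⁻¹ ξ)` is
subadditive; consequently `lim_{n→∞} a_n / n` exists. -/
theorem stmt_14 {X : Type*} [MeasurableSpace X] (μ : Measure X) [IsProbabilityMeasure μ]
    {ι : Type*} [Fintype ι] [Nonempty ι]
    (f : ι → X → X) (hf : ∀ i, MeasurePreserving (f i) μ μ)
    (ξ : Finset (Set X)) (hξ : IsPartition ξ) :
    (∀ n₁ n₂ : ℕ, 1 ≤ n₁ → 1 ≤ n₂ →
      entSeq f μ ξ (n₁ + n₂) ≤ entSeq f μ ξ n₁ + entSeq f μ ξ n₂) ∧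
    ∃ L : ℝ, Filter.Tendsto (fun n : ℕ => entSeq f μ ξ n / (n : ℝ)) atTop (𝓝 L) := by
  classical
  have hcpos : (0 : ℝ) < (Fintype.card ι : ℝ) := by
    exact_mod_cast Fintype.card_pos
  have hfm : ∀ i, Measurable (f i) := fun i => (hf i).measurable
  have hsub : Subadditive (entSeq f μ ξ) := by
    intro n₁ n₂
    set c : ℝ := (Fintype.card ι : ℝ)
    set H : List ι → ℝ := fun w => entPart μ (wordJoin f ξ w) with hH
    have hre : ∑ w : Fin (n₁ + n₂) → ι, H (List.ofFn w)
        = ∑ p : (Fin n₁ → ι) × (Fin n₂ → ι), H (List.ofFn p.1 ++ List.ofFn p.2) := by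
      refine (Fintype.sum_equiv (Fin.appendEquiv n₁ n₂)
        (fun p => H (List.ofFn p.1 ++ List.ofFn p.2))
        (fun w => H (List.ofFn w)) (fun p => ?_)).symm
      rw [Fin.appendEquiv]
      simp only [Equiv.coe_fn_mk]
      rw [List.ofFn_fin_append]
    have hsum : ∑ w : Fin (n₁ + n₂) → ι, H (List.ofFn w)
        ≤ c ^ n₂ * (∑ a : Fin n₁ → ι, H (List.ofFn a))
          + c ^ n₁ * (∑ b : Fin n₂ → ι, H (List.ofFn b)) := by
      rw [hre]
      calc ∑ p : (Fin n₁ → ι) × (Fin n₂ → ι), H (List.ofFn p.1 ++ List.ofFn p.2)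
          ≤ ∑ p : (Fin n₁ → ι) × (Fin n₂ → ι), (H (List.ofFn p.1) + H (List.ofFn p.2)) := by
            refine Finset.sum_le_sum fun p _ => ?_
            exact entPart_wordJoin_append_le μ hf hξ _ _
        _ = c ^ n₂ * (∑ a : Fin n₁ → ι, H (List.ofFn a))
              + c ^ n₁ * (∑ b : Fin n₂ → ι, H (List.ofFn b)) := by
            rw [Fintype.sum_prod_type]
            simp only [Finset.sum_add_distrib, Finset.sum_const, Finset.card_univ,
              nsmul_eq_mul, ← Finset.sum_mul, ← Finset.mul_sum]
            rw [Fintype.card_fun, Fintype.card_fun, Fintype.card_fin, Fintype.card_fin]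
            push_cast
            ring
    show (1 / c ^ (n₁ + n₂)) * ∑ w : Fin (n₁ + n₂) → ι, H (List.ofFn w)
        ≤ (1 / c ^ n₁) * (∑ a : Fin n₁ → ι, H (List.ofFn a))
          + (1 / c ^ n₂) * (∑ b : Fin n₂ → ι, H (List.ofFn b))
    have h2 : (1 / c ^ (n₁ + n₂)) * ∑ w : Fin (n₁ + n₂) → ι, H (List.ofFn w)
        ≤ (1 / c ^ (n₁ + n₂)) * (c ^ n₂ * (∑ a : Fin n₁ → ι, H (List.ofFn a))
          + c ^ n₁ * (∑ b : Fin n₂ → ι, H (List.ofFn b))) := by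
      refine mul_le_mul_of_nonneg_left hsum ?_
      positivity
    refine le_trans h2 (le_of_eq ?_)
    rw [pow_add]
    have hne1 : c ^ n₁ ≠ 0 := by positivity
    have hne2 : c ^ n₂ ≠ 0 := by positivity
    field_simp
  have hnonneg : ∀ n : ℕ, 0 ≤ entSeq f μ ξ n := by
    intro n
    refine mul_nonneg ?_ (Finset.sum_nonneg fun w _ => entPart_nonneg μ _)
    positivity
  have hbdd : BddBelow (Set.range fun n : ℕ => entSeq f μ ξ n / (n : ℝ)) := by
    refine ⟨0, ?_⟩
    rintro x ⟨n, rfl⟩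
    exact div_nonneg (hnonneg n) (Nat.cast_nonneg n)
  exact ⟨fun n₁ n₂ _ _ => hsub n₁ n₂, hsub.lim, hsub.tendsto_lim hbdd⟩

end FSA
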